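/- Let g:[0,T)→(0,∞) be a C¹ function with g'(t) ≤ C(1+g(t))³ for a constant C>0, and suppose limsup_{t→T} g(t) = +∞. Then lim_{t→T} g(t) = +∞ and there is a constant c>0 such that g(t) ≥ c/√(T−t) for all t∈[0,T). -/

import Mathlib

open Real Filter

/-- Blow-up rate: a positive `C¹` function `g` on `[0,T)` with `g' ≤ C(1+g)³` (`C > 0`)
whose limsup as `t → T⁻` is `+∞` actually tends to `+∞` as `t → T⁻`, and satisfies
`g(t) ≥ c/√(T−t)` on `[0,T)` for some constant `c > 0`. -/
theorem blowup_rate (C T : ℝ) (hC : 0 < C) (hT : 0 < T)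
    (g g' : ℝ → ℝ)
    (hpos : ∀ t ∈ Set.Ico (0:ℝ) T, 0 < g t)
    (hderiv : ∀ t ∈ Set.Ico (0:ℝ) T, HasDerivAt g (g' t) t)
    (hineq : ∀ t ∈ Set.Ico (0:ℝ) T, g' t ≤ C * (1 + g t) ^ 3)
    (hlimsup : ∀ M : ℝ, ∃ᶠ t in nhdsWithin T (Set.Iio T), M < g t) :
    Tendsto g (nhdsWithin T (Set.Iio T)) atTop ∧
    ∃ c > 0, ∀ t ∈ Set.Ico (0:ℝ) T, c / Real.sqrt (T - t) ≤ g t := by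
  set φ : ℝ → ℝ := fun u => ((1 + g u) ^ 2)⁻¹ + 2 * C * u with hφdef
  -- 1 + g > 0 on [0,T)
  have hone : ∀ u ∈ Set.Ico (0:ℝ) T, 0 < 1 + g u := fun u hu => by
    have := hpos u hu; linarith
  -- derivative of φ
  have hφderiv : ∀ u ∈ Set.Ico (0:ℝ) T,
      HasDerivAt φ (-(2 * (1 + g u) ^ 1 * g' u) / ((1 + g u) ^ 2) ^ 2 + 2 * C * 1) u := by
    intro u hu
    have h1 : HasDerivAt (fun v => 1 + g v) (g' u) u := (hderiv u hu).const_add 1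
    have h2 : HasDerivAt (fun v => (1 + g v) ^ 2) ((2:ℕ) * (1 + g u) ^ 1 * g' u) u := by
      simpa using h1.fun_pow 2
    have hne : (1 + g u) ^ 2 ≠ 0 := by
      have := hone u hu; positivity
    have h3 := h2.fun_inv hne
    have h4 : HasDerivAt (fun v => 2 * C * v) (2 * C * 1) u := (hasDerivAt_id u).const_mul (2 * C)
    simpa using h3.fun_add h4
  -- the derivative is nonnegative
  have hφnonneg : ∀ u ∈ Set.Ico (0:ℝ) T,
      0 ≤ -(2 * (1 + g u) ^ 1 * g' u) / ((1 + g u) ^ 2) ^ 2 + 2 * C * 1 := by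
    intro u hu
    have ha : 0 < 1 + g u := hone u hu
    have he : (0:ℝ) < ((1 + g u) ^ 2) ^ 2 := by positivity
    have hnum : 2 * (1 + g u) ^ 1 * g' u ≤ 2 * C * ((1 + g u) ^ 2) ^ 2 := by
      have := hineq u hu
      nlinarith [pow_pos ha 3, pow_pos ha 4]
    have hdiv : 2 * (1 + g u) ^ 1 * g' u / ((1 + g u) ^ 2) ^ 2 ≤ 2 * C := by
      rw [div_le_iff₀ he]; linarith
    rw [neg_div]
    linarith
  -- key monotonicity inequality
  have key : ∀ t ∈ Set.Ico (0:ℝ) T, ∀ s ∈ Set.Ico (0:ℝ) T, t ≤ s →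
      ((1 + g t) ^ 2)⁻¹ ≤ ((1 + g s) ^ 2)⁻¹ + 2 * C * (s - t) := by
    intro t ht s hs hts
    have hsub : Set.Icc t s ⊆ Set.Ico (0:ℝ) T := fun u hu =>
      ⟨le_trans ht.1 hu.1, lt_of_le_of_lt hu.2 hs.2⟩
    have hmono : MonotoneOn φ (Set.Icc t s) := by
      apply monotoneOn_of_hasDerivWithinAt_nonneg (convex_Icc t s)
        (f' := fun u => -(2 * (1 + g u) ^ 1 * g' u) / ((1 + g u) ^ 2) ^ 2 + 2 * C * 1)
      · intro u hu
        exact ((hφderiv u (hsub hu)).continuousAt).continuousWithinAt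
      · intro u hu
        exact ((hφderiv u (hsub (interior_subset hu))).hasDerivWithinAt)
      · intro u hu
        exact hφnonneg u (hsub (interior_subset hu))
    have := hmono (Set.left_mem_Icc.2 hts) (Set.right_mem_Icc.2 hts) hts
    simp only [hφdef] at this
    linarith
  -- key estimate
  have key2 : ∀ t ∈ Set.Ico (0:ℝ) T, ((1 + g t) ^ 2)⁻¹ ≤ 2 * C * (T - t) := by
    intro t ht
    apply le_of_forall_pos_le_add
    intro ε hε
    set M : ℝ := max 1 ε⁻¹ with hM
    obtain ⟨s, hsIoo, hsM⟩ : ∃ s, s ∈ Set.Ioo t T ∧ M < g s := by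
      have hev : ∀ᶠ s in nhdsWithin T (Set.Iio T), s ∈ Set.Ioo t T :=
        eventually_of_mem (Ioo_mem_nhdsLT_of_mem ⟨ht.2, le_refl T⟩) (fun _ h => h)
      obtain ⟨s, hs1, hs2⟩ := ((hlimsup M).and_eventually hev).exists
      exact ⟨s, hs2, hs1⟩
    have hsIco : s ∈ Set.Ico (0:ℝ) T := ⟨le_trans ht.1 hsIoo.1.le, hsIoo.2⟩
    have h1 := key t ht s hsIco hsIoo.1.le
    have hsmall : ((1 + g s) ^ 2)⁻¹ ≤ ε := by
      have hgs : (0:ℝ) < g s := lt_of_lt_of_le (lt_of_lt_of_le one_pos (le_max_left _ _)) hsM.le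
      have h2 : ε⁻¹ ≤ (1 + g s) ^ 2 := by
        have : ε⁻¹ ≤ M := le_max_right _ _
        nlinarith
      calc ((1 + g s) ^ 2)⁻¹ ≤ (ε⁻¹)⁻¹ := by
            apply inv_anti₀ (by positivity) h2
        _ = ε := inv_inv ε
    have h3 : 2 * C * (s - t) ≤ 2 * C * (T - t) := by
      have : s ≤ T := hsIoo.2.le
      nlinarith
    linarith
  -- consequence: (1+g t)^2 ≥ (2C(T-t))⁻¹
  have key3 : ∀ t ∈ Set.Ico (0:ℝ) T, (2 * C * (T - t))⁻¹ ≤ (1 + g t) ^ 2 := by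
    intro t ht
    have ha : (0:ℝ) < (1 + g t) ^ 2 := by have := hone t ht; positivity
    have hb : (0:ℝ) < 2 * C * (T - t) := by
      have : t < T := ht.2; nlinarith
    have := key2 t ht
    rw [inv_le_iff_one_le_mul₀ hb]
    rw [inv_le_iff_one_le_mul₀ ha] at this
    nlinarith
  constructor
  · -- tendsto atTop
    rw [tendsto_atTop]
    intro M
    set M' : ℝ := max M 0 with hM'
    set δ : ℝ := (2 * C * (1 + M') ^ 2)⁻¹ with hδ
    have hM'0 : 0 ≤ M' := le_max_right _ _
    have hδpos : 0 < δ := by positivity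
    have hl : max (T - δ) 0 < T := max_lt (by linarith) hT
    filter_upwards [Ioo_mem_nhdsLT_of_mem (Set.mem_Ioc.2 ⟨hl, le_refl T⟩)] with t ht
    have htIco : t ∈ Set.Ico (0:ℝ) T := ⟨le_of_lt (lt_of_le_of_lt (le_max_right _ _) ht.1), ht.2⟩
    have h1 := key2 t htIco
    have h2 : T - t < δ := by
      have : T - δ ≤ max (T - δ) 0 := le_max_left _ _
      linarith [ht.1]
    have h3 : 2 * C * (T - t) < ((1 + M') ^ 2)⁻¹ := by
      have hlt : 2 * C * (T - t) < 2 * C * δ := by nlinarith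
      have : 2 * C * δ = ((1 + M') ^ 2)⁻¹ := by
        rw [hδ]
        rw [mul_inv_eq_iff_eq_mul₀ (by positivity)]
        field_simp
      linarith
    have ha : (0:ℝ) < 1 + g t := hone t htIco
    have h4 : (1 + M') ^ 2 < (1 + g t) ^ 2 := by
      have hia : (0:ℝ) < ((1 + g t) ^ 2)⁻¹ := by positivity
      have h5 : ((1 + g t) ^ 2)⁻¹ < ((1 + M') ^ 2)⁻¹ := lt_of_le_of_lt h1 h3
      have h6 : (0:ℝ) < (1 + M') ^ 2 := by positivity
      rw [inv_lt_inv₀ (by positivity) h6] at h5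
      exact h5
    have h7 : 1 + M' < 1 + g t := by nlinarith
    have : M ≤ M' := le_max_left _ _
    linarith
  · -- lower bound
    -- minimum of g on the compact initial part
    set b : ℝ := max 0 (T - 1 / (8 * C)) with hb
    have hbT : b < T := by
      have : 0 < 1 / (8 * C) := by positivity
      exact max_lt hT (by linarith)
    have hKsub : Set.Icc (0:ℝ) b ⊆ Set.Ico (0:ℝ) T := fun u hu => ⟨hu.1, lt_of_le_of_lt hu.2 hbT⟩
    have hgcont : ContinuousOn g (Set.Icc (0:ℝ) b) := fun u hu =>
      ((hderiv u (hKsub hu)).continuousAt).continuousWithinAt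
    obtain ⟨u₀, hu₀, hmin⟩ := (isCompact_Icc).exists_isMinOn
      (Set.nonempty_Icc.2 (le_max_left 0 _)) hgcont
    have hm : 0 < g u₀ := hpos u₀ (hKsub hu₀)
    set c₁ : ℝ := 1 / (2 * Real.sqrt (2 * C)) with hc₁
    set c₂ : ℝ := g u₀ * Real.sqrt (1 / (8 * C)) with hc₂
    have hc₁pos : 0 < c₁ := by
      have : 0 < Real.sqrt (2 * C) := Real.sqrt_pos.2 (by linarith)
      positivity
    have hc₂pos : 0 < c₂ := by
      have : 0 < Real.sqrt (1 / (8 * C)) := Real.sqrt_pos.2 (by positivity)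
      positivity
    refine ⟨min c₁ c₂, lt_min hc₁pos hc₂pos, ?_⟩
    intro t ht
    have htT : 0 < T - t := by have := ht.2; linarith
    have hst : 0 < Real.sqrt (T - t) := Real.sqrt_pos.2 htT
    by_cases hcase : T - t ≤ 1 / (8 * C)
    · -- near the singular time
      have h1 := key3 t ht
      have ha : (0:ℝ) < 1 + g t := hone t ht
      have hb2 : (0:ℝ) < 2 * C * (T - t) := by positivity
      have h2 : Real.sqrt ((2 * C * (T - t))⁻¹) ≤ 1 + g t := by
        rw [show (1 + g t) = Real.sqrt ((1 + g t) ^ 2) from (Real.sqrt_sq ha.le).symm]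
        exact Real.sqrt_le_sqrt h1
      have h3 : Real.sqrt ((2 * C * (T - t))⁻¹) =
          (Real.sqrt (2 * C) * Real.sqrt (T - t))⁻¹ := by
        rw [Real.sqrt_inv, Real.sqrt_mul (by linarith : (0:ℝ) ≤ 2 * C)]
      have hge2 : (4:ℝ) ≤ (2 * C * (T - t))⁻¹ := by
        rw [le_inv_comm₀ (by norm_num) hb2]
        have h8 : C * (T - t) ≤ C * (1 / (8 * C)) :=
          mul_le_mul_of_nonneg_left hcase hC.le
        have h9 : C * (1 / (8 * C)) = 1 / 8 := by field_simp
        linarith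
      have h4 : (2:ℝ) ≤ Real.sqrt ((2 * C * (T - t))⁻¹) :=
        Real.le_sqrt_of_sq_le (le_trans (by norm_num) hge2)
      -- g t ≥ (1/2) * sqrt((2C(T-t))⁻¹)
      have h5 : Real.sqrt ((2 * C * (T - t))⁻¹) / 2 ≤ g t := by linarith
      have hsc : 0 < Real.sqrt (2 * C) := Real.sqrt_pos.2 (by linarith)
      have h7 : c₁ / Real.sqrt (T - t) = Real.sqrt ((2 * C * (T - t))⁻¹) / 2 := by
        rw [h3, hc₁]
        field_simp
      calc min c₁ c₂ / Real.sqrt (T - t) ≤ c₁ / Real.sqrt (T - t) :=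
            div_le_div_of_nonneg_right (min_le_left _ _) hst.le
        _ = Real.sqrt ((2 * C * (T - t))⁻¹) / 2 := h7
        _ ≤ g t := h5
    · -- away from the singular time
      push_neg at hcase
      have htb : t ≤ b := by
        have : t < T - 1 / (8 * C) := by linarith
        exact le_trans this.le (le_max_right _ _)
      have hgm : g u₀ ≤ g t := hmin ⟨ht.1, htb⟩
      have hs8 : Real.sqrt (1 / (8 * C)) ≤ Real.sqrt (T - t) := Real.sqrt_le_sqrt hcase.le
      have h1 : min c₁ c₂ / Real.sqrt (T - t) ≤ c₂ / Real.sqrt (T - t) :=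
        div_le_div_of_nonneg_right (min_le_right _ _) hst.le
      have h2 : c₂ / Real.sqrt (T - t) ≤ g u₀ := by
        rw [div_le_iff₀ hst, hc₂]
        have := hm
        nlinarith
      linarith
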